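/- arXiv:1608.00160 — 4 statements merged into one kernel-verified Lean document; each statement's English description precedes it below -/
import Mathlib

section
/- Suppose ρ : [a,b] → (0,∞) is continuous, differentiable on (a,b), satisfies r²ρ̇² + ω²/ρ² − ρ² = c on (a,b) with ω ≠ 0, and ρ̇ ≥ 0. If ρ̇(r̄) = 0 for some r̄ ∈ (a,b] and ρ̇ > 0 on (r̄−δ, r̄) for some δ > 0, then a contradiction follows; i.e., ρ̇ cannot vanish at the right endpoint of an interval where it is strictly positive. -/
open Set

/-- If `ρ > 0` solves `r²ρ̇² + ω²/ρ² − ρ² = c` with `ω ≠ 0` and `ρ̇ ≥ 0`, then `ρ̇`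
cannot vanish at the right endpoint `r₀ ∈ (a,b]` of an interval `(r₀−δ, r₀)` on
which it is strictly positive. -/
theorem deriv_cannot_vanish_at_right_endpoint (a b c ω r₀ δ : ℝ) (ρ : ℝ → ℝ)
    (hab : a < b) (hω : ω ≠ 0)
    (hcont : ContinuousOn ρ (Set.Icc a b))
    (hpos : ∀ r ∈ Set.Icc a b, 0 < ρ r)
    (hdiff : ∀ r ∈ Set.Ioc a b, DifferentiableAt ℝ ρ r)
    (hode : ∀ r ∈ Set.Ioc a b,
      r ^ 2 * (deriv ρ r) ^ 2 + ω ^ 2 / (ρ r) ^ 2 - (ρ r) ^ 2 = c)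
    (hmono : ∀ r ∈ Set.Ioc a b, 0 ≤ deriv ρ r)
    (hr₀ : r₀ ∈ Set.Ioc a b) (hzero : deriv ρ r₀ = 0)
    (hδ : 0 < δ) (hsub : Set.Ioo (r₀ - δ) r₀ ⊆ Set.Ioc a b)
    (hstrict : ∀ r ∈ Set.Ioo (r₀ - δ) r₀, 0 < deriv ρ r) :
    False := by
  set z : ℝ → ℝ := fun r => ρ r ^ 2 - ω ^ 2 / ρ r ^ 2 + c with hz
  set r₁ : ℝ := r₀ - δ / 2 with hr₁
  have hr₁mem : r₁ ∈ Set.Ioo (r₀ - δ) r₀ := by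
    constructor <;> simp [hr₁] <;> linarith
  have hr₁ab : r₁ ∈ Set.Ioc a b := hsub hr₁mem
  have hIcc_sub : Set.Icc r₁ r₀ ⊆ Set.Icc a b := by
    intro x hx
    exact ⟨le_of_lt (lt_of_lt_of_le hr₁ab.1 hx.1), le_trans hx.2 hr₀.2⟩
  -- continuity of z on Icc r₁ r₀
  have hcontz : ContinuousOn z (Set.Icc r₁ r₀) := by
    have hρc : ContinuousOn ρ (Set.Icc r₁ r₀) := hcont.mono hIcc_sub
    have hne : ∀ x ∈ Set.Icc r₁ r₀, ρ x ^ 2 ≠ 0 := fun x hx =>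
      pow_ne_zero 2 (ne_of_gt (hpos x (hIcc_sub hx)))
    exact ((hρc.pow 2).sub ((continuousOn_const).div (hρc.pow 2) hne)).add
      continuousOn_const
  -- strict monotonicity of z on Icc r₁ r₀
  have hmono_z : StrictMonoOn z (Set.Icc r₁ r₀) := by
    apply strictMonoOn_of_deriv_pos (convex_Icc r₁ r₀) hcontz
    intro x hx
    rw [interior_Icc] at hx
    have hxab : x ∈ Set.Ioc a b := hsub ⟨by linarith [hx.1, hr₁mem.1], hx.2⟩
    have hd : 0 < deriv ρ x := hstrict x ⟨by linarith [hx.1, hr₁mem.1], hx.2⟩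
    have hp : 0 < ρ x := hpos x ⟨le_of_lt hxab.1, hxab.2⟩
    have hρd : HasDerivAt ρ (deriv ρ x) x := (hdiff x hxab).hasDerivAt
    have h1 : HasDerivAt (fun r => ρ r ^ 2) (2 * ρ x * deriv ρ x) x := by
      have := hρd.fun_pow 2
      simpa [mul_comm, mul_assoc] using this
    have h2 : HasDerivAt (fun r => ω ^ 2 / ρ r ^ 2)
        ((0 * ρ x ^ 2 - ω ^ 2 * (2 * ρ x * deriv ρ x)) / (ρ x ^ 2) ^ 2) x :=
      (hasDerivAt_const x (ω ^ 2)).div h1 (pow_ne_zero 2 (ne_of_gt hp))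
    have hzd : HasDerivAt z
        (2 * ρ x * deriv ρ x -
          (0 * ρ x ^ 2 - ω ^ 2 * (2 * ρ x * deriv ρ x)) / (ρ x ^ 2) ^ 2) x :=
      (h1.sub h2).add_const c
    rw [hzd.deriv]
    have hω2 : 0 < ω ^ 2 := by positivity
    rw [zero_mul, zero_sub, neg_div, sub_neg_eq_add]
    positivity
  -- z r₀ = 0
  have hzr₀ : z r₀ = 0 := by
    have := hode r₀ hr₀
    rw [hzero] at this
    simp only [hz]
    nlinarith [this]
  -- z r₁ ≥ 0
  have hzr₁ : 0 ≤ z r₁ := by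
    have hode₁ := hode r₁ hr₁ab
    have : z r₁ = r₁ ^ 2 * (deriv ρ r₁) ^ 2 := by simp only [hz]; linarith
    rw [this]; positivity
  have hlt : z r₁ < z r₀ :=
    hmono_z ⟨le_refl _, le_of_lt hr₁mem.2⟩ ⟨le_of_lt hr₁mem.2, le_refl _⟩ hr₁mem.2
  linarith
end

section
/- Let ρ, ψ be C² on (a,b) with ρ > 0, satisfying rρ²ψ̇ = ω with ω ≠ 0, and the Euler–Lagrange equation (rρ̇ + ρh₀'(d))' = ρ/r + rρψ̇² + ρ̇h₀'(d) where d = ρρ̇/r and h₀ is C² convex. Then d cannot have ḋ ≤ 0 at any point of (a,b); i.e., d is strictly monotonically increasing. -/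
set_option maxHeartbeats 1000000


open Set

/-- A convex function's second derivative (when it exists) is nonnegative at an
interior point of `Ioi 0`. -/
lemma aux_second_deriv_nonneg {h₀ : ℝ → ℝ} {x H : ℝ} (hx : 0 < x)
    (hconv : ConvexOn ℝ (Set.Ioi 0) h₀)
    (hd : ∀ y ∈ Set.Ioi (0:ℝ), DifferentiableAt ℝ h₀ y)
    (hH : HasDerivAt (deriv h₀) H x) : 0 ≤ H := by
  have hmono : MonotoneOn (deriv h₀) (Set.Ioi 0) := hconv.monotoneOn_deriv hd
  have ht : Filter.Tendsto (slope (deriv h₀) x) (nhdsWithin x (Set.Ioi x)) (nhds H) := by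
    have h1 := (hH.hasDerivWithinAt (s := Set.Ioi x))
    rw [hasDerivWithinAt_iff_tendsto_slope] at h1
    have : Set.Ioi x \ {x} = Set.Ioi x := Set.diff_singleton_eq_self (by simp)
    rwa [this] at h1
  refine ge_of_tendsto ht ?_
  filter_upwards [self_mem_nhdsWithin] with y hy
  have hxy : x < y := hy
  have hmle : deriv h₀ x ≤ deriv h₀ y := hmono hx (lt_trans hx hxy) hxy.le
  have : (0:ℝ) ≤ (deriv h₀ y - deriv h₀ x) / (y - x) :=
    div_nonneg (by linarith) (by linarith)
  simpa [slope_def_field] using this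

/-- Lemma 8 (first part): for a rotationally symmetric solution of the
Euler–Lagrange equations with stored energy `½|F|² + h₀(det F)`, the Jacobian
`d = ρρ̇/r` is strictly monotonically increasing; in particular `ḋ ≤ 0` is
impossible at any point of `(a,b)`. -/
theorem jacobian_strictly_increasing (a b ω : ℝ) (ha : 0 < a) (hab : a < b)
    (hω : ω ≠ 0) (ρ ψ h₀ : ℝ → ℝ)
    (hρ : ContDiffOn ℝ 2 ρ (Set.Ioo a b)) (hψ : ContDiffOn ℝ 2 ψ (Set.Ioo a b))
    (hρpos : ∀ r ∈ Set.Ioo a b, 0 < ρ r)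
    (hh₀ : ContDiffOn ℝ 2 h₀ (Set.Ioi 0)) (hconv : ConvexOn ℝ (Set.Ioi 0) h₀)
    (hdpos : ∀ r ∈ Set.Ioo a b, 0 < ρ r * deriv ρ r / r)
    (hang : ∀ r ∈ Set.Ioo a b, r * (ρ r) ^ 2 * deriv ψ r = ω)
    (hEL : ∀ r ∈ Set.Ioo a b,
      HasDerivAt (fun s => s * deriv ρ s + ρ s * deriv h₀ (ρ s * deriv ρ s / s))
        (ρ r / r + r * ρ r * (deriv ψ r) ^ 2
          + deriv ρ r * deriv h₀ (ρ r * deriv ρ r / r)) r) :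
    (∀ r ∈ Set.Ioo a b, 0 < deriv (fun s => ρ s * deriv ρ s / s) r)
    ∧ StrictMonoOn (fun s => ρ s * deriv ρ s / s) (Set.Ioo a b) := by
  have hopen : IsOpen (Set.Ioo a b) := isOpen_Ioo
  have hρ1 : ContDiffOn ℝ 1 (deriv ρ) (Set.Ioo a b) :=
    hρ.deriv_of_isOpen hopen (by norm_num)
  have hh₀1 : ContDiffOn ℝ 1 (deriv h₀) (Set.Ioi 0) :=
    hh₀.deriv_of_isOpen isOpen_Ioi (by norm_num)
  have key : ∀ r ∈ Set.Ioo a b, 0 < deriv (fun s => ρ s * deriv ρ s / s) r := by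
    intro r hr
    have hr0 : 0 < r := lt_trans ha hr.1
    have hrmem : Set.Ioo a b ∈ nhds r := hopen.mem_nhds hr
    have hρat : HasDerivAt ρ (deriv ρ r) r :=
      ((hρ.differentiableOn (by norm_num)).differentiableAt hrmem).hasDerivAt
    have hρ'at : HasDerivAt (deriv ρ) (deriv (deriv ρ) r) r :=
      ((hρ1.differentiableOn (by norm_num)).differentiableAt hrmem).hasDerivAt
    set p := ρ r with hpdef
    set q := deriv ρ r with hqdef
    set q2 := deriv (deriv ρ) r with hq2def
    have hp : 0 < p := hρpos r hr
    have hdfun : HasDerivAt (fun s => ρ s * deriv ρ s / s)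
        (((q * q + p * q2) * r - p * q * 1) / r ^ 2) r :=
      (hρat.mul hρ'at).div (hasDerivAt_id r) hr0.ne'
    set D := ((q * q + p * q2) * r - p * q * 1) / r ^ 2 with hDdef
    rw [hdfun.deriv]
    by_contra hDle
    push_neg at hDle
    -- second derivative of h₀ at the Jacobian value
    have hdr : 0 < p * q / r := hdpos r hr
    have hh₀'at : HasDerivAt (deriv h₀) (deriv (deriv h₀) (p * q / r)) (p * q / r) :=
      ((hh₀1.differentiableOn (by norm_num)).differentiableAt (isOpen_Ioi.mem_nhds hdr)).hasDerivAt
    set H := deriv (deriv h₀) (p * q / r) with hHdef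
    have hcomp : HasDerivAt (fun s => deriv h₀ (ρ s * deriv ρ s / s)) (H * D) r := by
      have h2 : HasDerivAt (deriv h₀) H ((fun s => ρ s * deriv ρ s / s) r) := hh₀'at
      have := HasDerivAt.comp (h := fun s => ρ s * deriv ρ s / s) r h2 hdfun
      exact this
    have hG : HasDerivAt (fun s => s * deriv ρ s + ρ s * deriv h₀ (ρ s * deriv ρ s / s))
        ((1 * q + r * q2) + (q * deriv h₀ (p * q / r) + p * (H * D))) r :=
      ((hasDerivAt_id r).mul hρ'at).add (hρat.mul hcomp)
    have heq := (hEL r hr).unique hG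
    have hH0 : 0 ≤ H :=
      aux_second_deriv_nonneg hdr hconv
        (fun y hy => (hh₀.differentiableOn (by norm_num)).differentiableAt
          (isOpen_Ioi.mem_nhds hy)) hh₀'at
    have hψr : r * p ^ 2 * deriv ψ r = ω := hang r hr
    have hψ0 : deriv ψ r ≠ 0 := by
      intro h
      apply hω
      rw [← hψr, h, mul_zero]
    have hψ2 : 0 < (deriv ψ r) ^ 2 := pow_two_pos_of_ne_zero hψ0
    have heq2 : p / r + r * p * (deriv ψ r) ^ 2 = q + r * q2 + p * (H * D) := by
      nlinarith [heq]
    have e3 : p + r ^ 2 * p * (deriv ψ r) ^ 2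
        = q * r + r ^ 2 * q2 + p * (H * D) * r := by
      have := congrArg (fun t => t * r) heq2
      field_simp at this
      nlinarith [this]
    have eD : D * r ^ 2 = (q * q + p * q2) * r - p * q := by
      rw [hDdef]
      field_simp
    have hHD : H * D ≤ 0 := mul_nonpos_of_nonneg_of_nonpos hH0 hDle
    have hpHDr : p * (H * D) * r ≤ 0 :=
      mul_nonpos_of_nonpos_of_nonneg (mul_nonpos_of_nonneg_of_nonpos hp.le hHD) hr0.le
    have hDr2 : D * r ^ 2 ≤ 0 := mul_nonpos_of_nonpos_of_nonneg hDle (sq_nonneg r)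
    have ineqA : p + r ^ 2 * p * (deriv ψ r) ^ 2 ≤ q * r + r ^ 2 * q2 := by linarith
    have ineqB : (q * q + p * q2) * r ≤ p * q := by linarith
    have t1 : p * (p + r ^ 2 * p * (deriv ψ r) ^ 2) ≤ p * (q * r + r ^ 2 * q2) :=
      mul_le_mul_of_nonneg_left ineqA hp.le
    have t2 : ((q * q + p * q2) * r) * r ≤ (p * q) * r :=
      mul_le_mul_of_nonneg_right ineqB hr0.le
    nlinarith [t1, t2, sq_nonneg (p - r * q),
      mul_pos (mul_pos (mul_pos hr0 hr0) (mul_pos hp hp)) hψ2]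
  refine ⟨key, ?_⟩
  apply strictMonoOn_of_deriv_pos (convex_Ioo a b)
  · exact ((hρ.continuousOn.mul (hρ1.continuousOn)).div continuousOn_id
      (fun x hx => (lt_trans ha hx.1).ne'))
  · intro x hx
    rw [interior_Ioo] at hx
    exact key x hx
end

section
/- Under the same hypotheses, z(r) := ½(ρ̇² + ω²/(r²ρ²) − ρ²/r²) + f(d) + ρ²/r², with f(s) = s h₀'(s) − h₀(s), satisfies ż(r) = −(1/r)[(ρ̇ − ρ/r)² + ω²/(r²ρ²)] < 0, so z is strictly decreasing on (a,b). -/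
open Set

/-- Lemma 8 (second part): with `f(s) = s h₀'(s) − h₀(s)`, the function
`z = ½(ρ̇² + ω²/(r²ρ²) − ρ²/r²) + f(d) + ρ²/r²` satisfies
`ż = −(1/r)[(ρ̇ − ρ/r)² + ω²/(r²ρ²)] < 0`, hence is strictly decreasing
on `(a,b)`. -/
theorem z_strictly_decreasing (a b ω : ℝ) (ha : 0 < a) (hab : a < b)
    (hω : ω ≠ 0) (ρ ψ h₀ : ℝ → ℝ)
    (hρ : ContDiffOn ℝ 2 ρ (Set.Ioo a b)) (hψ : ContDiffOn ℝ 2 ψ (Set.Ioo a b))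
    (hρpos : ∀ r ∈ Set.Ioo a b, 0 < ρ r)
    (hh₀ : ContDiffOn ℝ 2 h₀ (Set.Ioi 0)) (hconv : ConvexOn ℝ (Set.Ioi 0) h₀)
    (hdpos : ∀ r ∈ Set.Ioo a b, 0 < ρ r * deriv ρ r / r)
    (hang : ∀ r ∈ Set.Ioo a b, r * (ρ r) ^ 2 * deriv ψ r = ω)
    (hEL : ∀ r ∈ Set.Ioo a b,
      HasDerivAt (fun s => s * deriv ρ s + ρ s * deriv h₀ (ρ s * deriv ρ s / s))
        (ρ r / r + r * ρ r * (deriv ψ r) ^ 2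
          + deriv ρ r * deriv h₀ (ρ r * deriv ρ r / r)) r) :
    (∀ r ∈ Set.Ioo a b,
      deriv (fun s => (1 / 2) * ((deriv ρ s) ^ 2 + ω ^ 2 / (s ^ 2 * (ρ s) ^ 2)
          - (ρ s) ^ 2 / s ^ 2)
        + ((ρ s * deriv ρ s / s) * deriv h₀ (ρ s * deriv ρ s / s)
            - h₀ (ρ s * deriv ρ s / s))
        + (ρ s) ^ 2 / s ^ 2) r
      = -(1 / r) * ((deriv ρ r - ρ r / r) ^ 2 + ω ^ 2 / (r ^ 2 * (ρ r) ^ 2))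
      ∧ deriv (fun s => (1 / 2) * ((deriv ρ s) ^ 2 + ω ^ 2 / (s ^ 2 * (ρ s) ^ 2)
          - (ρ s) ^ 2 / s ^ 2)
        + ((ρ s * deriv ρ s / s) * deriv h₀ (ρ s * deriv ρ s / s)
            - h₀ (ρ s * deriv ρ s / s))
        + (ρ s) ^ 2 / s ^ 2) r < 0)
    ∧ StrictAntiOn (fun s => (1 / 2) * ((deriv ρ s) ^ 2 + ω ^ 2 / (s ^ 2 * (ρ s) ^ 2)
          - (ρ s) ^ 2 / s ^ 2)
        + ((ρ s * deriv ρ s / s) * deriv h₀ (ρ s * deriv ρ s / s)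
            - h₀ (ρ s * deriv ρ s / s))
        + (ρ s) ^ 2 / s ^ 2) (Set.Ioo a b) := by
  have key : ∀ r ∈ Set.Ioo a b,
      HasDerivAt (fun s => (1 / 2) * ((deriv ρ s) ^ 2 + ω ^ 2 / (s ^ 2 * (ρ s) ^ 2)
          - (ρ s) ^ 2 / s ^ 2)
        + ((ρ s * deriv ρ s / s) * deriv h₀ (ρ s * deriv ρ s / s)
            - h₀ (ρ s * deriv ρ s / s))
        + (ρ s) ^ 2 / s ^ 2)
      (-(1 / r) * ((deriv ρ r - ρ r / r) ^ 2 + ω ^ 2 / (r ^ 2 * (ρ r) ^ 2))) r := by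
    intro r hr
    have hr0 : 0 < r := ha.trans hr.1
    have hP : 0 < ρ r := hρpos r hr
    have hρd : HasDerivAt ρ (deriv ρ r) r :=
      (((hρ.differentiableOn (by norm_num)).differentiableAt (isOpen_Ioo.mem_nhds hr))).hasDerivAt
    have hρ'd : HasDerivAt (deriv ρ) (deriv (deriv ρ) r) r := by
      have h2 : ContDiffOn ℝ 1 (deriv ρ) (Ioo a b) :=
        ((contDiffOn_succ_iff_deriv_of_isOpen (n := 1) isOpen_Ioo).mp (by exact_mod_cast hρ)).2.2
      exact ((h2.differentiableOn one_ne_zero).differentiableAt (isOpen_Ioo.mem_nhds hr)).hasDerivAt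
    have hmpos : (ρ r * deriv ρ r / r) ∈ Ioi (0:ℝ) := hdpos r hr
    have hh₀1 : HasDerivAt h₀ (deriv h₀ (ρ r * deriv ρ r / r)) (ρ r * deriv ρ r / r) :=
      ((hh₀.differentiableOn (by norm_num)).differentiableAt (isOpen_Ioi.mem_nhds hmpos)).hasDerivAt
    have hh₀2 : HasDerivAt (deriv h₀) (deriv (deriv h₀) (ρ r * deriv ρ r / r))
        (ρ r * deriv ρ r / r) := by
      have h2 : ContDiffOn ℝ 1 (deriv h₀) (Ioi 0) :=
        ((contDiffOn_succ_iff_deriv_of_isOpen (n := 1) isOpen_Ioi).mp (by exact_mod_cast hh₀)).2.2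
      exact ((h2.differentiableOn one_ne_zero).differentiableAt (isOpen_Ioi.mem_nhds hmpos)).hasDerivAt
    set D : ℝ := ((deriv ρ r) ^ 2 * r + ρ r * deriv (deriv ρ) r * r - ρ r * deriv ρ r) / r ^ 2
      with hD
    have hdd : HasDerivAt (fun s => ρ s * deriv ρ s / s) D r := by
      have h := (hρd.mul hρ'd).div (hasDerivAt_id r) hr0.ne'
      convert h using 1
      · rfl
      · rfl
      · rfl
      rw [hD]; simp only [id_eq, Pi.mul_apply]; ring
    have hH1 : HasDerivAt (fun s => deriv h₀ (ρ s * deriv ρ s / s))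
        (deriv (deriv h₀) (ρ r * deriv ρ r / r) * D) r :=
      HasDerivAt.comp (h := fun s => ρ s * deriv ρ s / s) r hh₀2 hdd
    have hh0comp : HasDerivAt (fun s => h₀ (ρ s * deriv ρ s / s))
        (deriv h₀ (ρ r * deriv ρ r / r) * D) r :=
      HasDerivAt.comp (h := fun s => ρ s * deriv ρ s / s) r hh₀1 hdd
    have hg : HasDerivAt (fun s => s * deriv ρ s + ρ s * deriv h₀ (ρ s * deriv ρ s / s))
        (1 * deriv ρ r + r * deriv (deriv ρ) r
          + (deriv ρ r * deriv h₀ (ρ r * deriv ρ r / r)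
              + ρ r * (deriv (deriv h₀) (ρ r * deriv ρ r / r) * D))) r :=
      ((hasDerivAt_id r).mul hρ'd).add (hρd.mul hH1)
    have hEL' := (hEL r hr).unique hg
    have hK : ρ r * (deriv (deriv h₀) (ρ r * deriv ρ r / r) * D)
        = ρ r / r + r * ρ r * (deriv ψ r) ^ 2 - deriv ρ r - r * deriv (deriv ρ) r := by
      linarith [hEL']
    have hne : r ^ 2 * (ρ r) ^ 2 ≠ 0 := by positivity
    have hz0 := (((((hρ'd.pow 2).add
        ((hasDerivAt_const r (ω ^ 2)).div ((hasDerivAt_pow 2 r).mul (hρd.pow 2)) hne)).sub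
        ((hρd.pow 2).div (hasDerivAt_pow 2 r) (pow_ne_zero 2 hr0.ne'))).const_mul
        ((1:ℝ) / 2)).add ((hdd.mul hH1).sub hh0comp)).add
        ((hρd.pow 2).div (hasDerivAt_pow 2 r) (pow_ne_zero 2 hr0.ne'))
    convert hz0 using 1
    · rfl
    · rfl
    · rfl
    have hW := hang r hr
    have hq : deriv ψ r = ω / (r * (ρ r) ^ 2) := by
      rw [eq_div_iff (by positivity)]; linarith [hW]
    have hXval : deriv (deriv h₀) (ρ r * deriv ρ r / r) * D
        = (ρ r / r + r * ρ r * (deriv ψ r) ^ 2 - deriv ρ r - r * deriv (deriv ρ) r) / ρ r := by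
      rw [eq_div_iff hP.ne']; linarith [hK]
    rw [hq] at hXval
    rw [hXval, hD]
    simp only [Pi.mul_apply, Pi.pow_apply]
    field_simp
    ring
  have hderiv : ∀ r ∈ Set.Ioo a b,
      deriv (fun s => (1 / 2) * ((deriv ρ s) ^ 2 + ω ^ 2 / (s ^ 2 * (ρ s) ^ 2)
          - (ρ s) ^ 2 / s ^ 2)
        + ((ρ s * deriv ρ s / s) * deriv h₀ (ρ s * deriv ρ s / s)
            - h₀ (ρ s * deriv ρ s / s))
        + (ρ s) ^ 2 / s ^ 2) r
      = -(1 / r) * ((deriv ρ r - ρ r / r) ^ 2 + ω ^ 2 / (r ^ 2 * (ρ r) ^ 2)) :=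
    fun r hr => (key r hr).deriv
  have hneg : ∀ r ∈ Set.Ioo a b,
      -(1 / r) * ((deriv ρ r - ρ r / r) ^ 2 + ω ^ 2 / (r ^ 2 * (ρ r) ^ 2)) < 0 := by
    intro r hr
    have hr0 : 0 < r := ha.trans hr.1
    have hP : 0 < ρ r := hρpos r hr
    have h1 : 0 < ω ^ 2 / (r ^ 2 * (ρ r) ^ 2) := by positivity
    have h2 : (0:ℝ) ≤ (deriv ρ r - ρ r / r) ^ 2 := sq_nonneg _
    have h3 : 0 < 1 / r := by positivity
    nlinarith
  refine ⟨fun r hr => ⟨hderiv r hr, by rw [hderiv r hr]; exact hneg r hr⟩, ?_⟩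
  apply strictAntiOn_of_deriv_neg (convex_Ioo a b)
  · intro x hx
    exact (key x hx).differentiableAt.continuousAt.continuousWithinAt
  · intro x hx
    rw [interior_Ioo] at hx
    rw [hderiv x hx]
    exact hneg x hx
end

section
/- Let ρ be C² on (a,b) with d = ρρ̇/r strictly increasing and ρ > 0. Then the function r ↦ ρ(r)/r attains no interior local maximum: there is no r ∈ (a,b) with (ρ/r)'(r) = 0 and (ρ/r)''(r) ≤ 0. -/
open Set

/-- Theorem 10 (no interior local maximum): if `ρ > 0` is `C²` on `(a,b)` and
`d = ρρ̇/r` is strictly increasing (`ḋ > 0`), then `ρ/r` has no interior point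
with `(ρ/r)' = 0` and `(ρ/r)'' ≤ 0`. -/
theorem no_interior_local_max (a b : ℝ) (ha : 0 < a) (hab : a < b) (ρ : ℝ → ℝ)
    (hρ : ContDiffOn ℝ 2 ρ (Set.Ioo a b))
    (hρpos : ∀ r ∈ Set.Ioo a b, 0 < ρ r)
    (hd : ∀ r ∈ Set.Ioo a b, 0 < deriv (fun s => ρ s * deriv ρ s / s) r) :
    ¬ ∃ r ∈ Set.Ioo a b,
      deriv (fun s => ρ s / s) r = 0 ∧ deriv (deriv (fun s => ρ s / s)) r ≤ 0 := by
  rintro ⟨r, hr, h1, h2⟩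
  have hsO : IsOpen (Set.Ioo a b) := isOpen_Ioo
  have hr0 : 0 < r := lt_trans ha hr.1
  have hmem : Set.Ioo a b ∈ nhds r := hsO.mem_nhds hr
  have hρd : ∀ x ∈ Set.Ioo a b, DifferentiableAt ℝ ρ x := fun x hx =>
    (hρ.differentiableOn (by norm_num)).differentiableAt (hsO.mem_nhds hx)
  have hρ'c : ContDiffOn ℝ 1 (deriv ρ) (Set.Ioo a b) :=
    hρ.deriv_of_isOpen hsO (by norm_num)
  have hρ'd : ∀ x ∈ Set.Ioo a b, DifferentiableAt ℝ (deriv ρ) x := fun x hx =>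
    (hρ'c.differentiableOn (by norm_num)).differentiableAt (hsO.mem_nhds hx)
  set P := ρ r with hP_def
  set P1 := deriv ρ r with hP1_def
  set P2 := deriv (deriv ρ) r with hP2_def
  have hP : 0 < P := hρpos r hr
  -- formula for first derivative of ρ/r on the open set
  have hF : ∀ x ∈ Set.Ioo a b,
      deriv (fun y => ρ y / y) x = (deriv ρ x * x - ρ x) / x ^ 2 := by
    intro x hx
    have hx0 : x ≠ 0 := ne_of_gt (lt_trans ha hx.1)
    rw [deriv_fun_div (hρd x hx) differentiableAt_fun_id hx0]
    simp
  -- critical point condition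
  have hc : P1 * r = P := by
    have := hF r hr
    rw [h1] at this
    have hr2 : (r : ℝ) ^ 2 ≠ 0 := pow_ne_zero _ (ne_of_gt hr0)
    field_simp at this
    linarith [this.symm]
  -- derivative of d at r
  have hdD : HasDerivAt (fun y => ρ y * deriv ρ y / y)
      (((P1 * P1 + P * P2) * r - P * P1 * 1) / r ^ 2) r := by
    exact HasDerivAt.div
      (((hρd r hr).hasDerivAt.mul (hρ'd r hr).hasDerivAt))
      (hasDerivAt_id r) (ne_of_gt hr0)
  have hdpos : 0 < ((P1 * P1 + P * P2) * r - P * P1 * 1) / r ^ 2 := by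
    rw [← hdD.deriv]; exact hd r hr
  have hP2 : 0 < P2 := by
    have hnum : 0 < (P1 * P1 + P * P2) * r - P * P1 * 1 := by
      have hr2 : (0:ℝ) < r ^ 2 := by positivity
      exact (div_pos_iff.mp hdpos).resolve_right (fun h => absurd hr2 (not_lt.mpr (le_of_lt h.2))) |>.1
    have hq : P1 * P1 * r = P * P1 := by rw [mul_assoc, hc]; ring
    nlinarith [mul_pos hP hr0, hq]
  -- second derivative of ρ/r at r
  have hev : deriv (fun y => ρ y / y) =ᶠ[nhds r]
      (fun x => (deriv ρ x * x - ρ x) / x ^ 2) := by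
    filter_upwards [hmem] with x hx using hF x hx
  have hN : HasDerivAt (fun x => deriv ρ x * x - ρ x) (P2 * r + P1 * 1 - P1) r :=
    ((hρ'd r hr).hasDerivAt.mul (hasDerivAt_id r)).sub (hρd r hr).hasDerivAt
  have hD2 : HasDerivAt (fun x => (deriv ρ x * x - ρ x) / x ^ 2)
      (((P2 * r + P1 * 1 - P1) * r ^ 2 - (P1 * r - P) * (2 * r)) / (r ^ 2) ^ 2) r := by
    have hden : HasDerivAt (fun x : ℝ => x ^ 2) (2 * r) r := by
      simpa using hasDerivAt_pow 2 r
    exact hN.div hden (pow_ne_zero _ (ne_of_gt hr0))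
  have hval : deriv (deriv (fun s => ρ s / s)) r
      = ((P2 * r + P1 * 1 - P1) * r ^ 2 - (P1 * r - P) * (2 * r)) / (r ^ 2) ^ 2 := by
    rw [hev.deriv_eq]; exact hD2.deriv
  rw [hval] at h2
  have : ((P2 * r + P1 * 1 - P1) * r ^ 2 - (P1 * r - P) * (2 * r)) / (r ^ 2) ^ 2 = P2 / r := by
    rw [hc]; field_simp; ring
  rw [this] at h2
  exact absurd h2 (not_le.mpr (div_pos hP2 hr0))
end
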